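/- Let d ≥ 1 be an integer, 0 < α ≤ 2, 0 < β ≤ 1. Let q : ℝ^d → [0,∞) be measurable and set p_t(x) = t^{−d/α} q(t^{−1/α} x) for t > 0. Then for every a > 0, every k ≥ 1, all 0 ≤ t₁ < ⋯ < t_k and z₁,…,z_k ∈ ℝ, one has the identity (in [0,∞]): ∫_{ℝ^d} ∫_0^∞ | Σ_{j=1}^k z_j 𝟙_{[0, a t_j]}(r) ∫_r^{a t_j} p_{u−r}(x) du |^{1+β} dr dx = a^{2+β−(d/α)β} · ∫_{ℝ^d} ∫_0^∞ | Σ_{j=1}^k z_j 𝟙_{[0, t_j]}(r) ∫_r^{t_j} p_{u−r}(x) du |^{1+β} dr dx. (This identity expresses the self-similarity of the limit process ξ with index H = (2+β−(d/α)β)/(1+β).) -/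

import Mathlib

open MeasureTheory

/-- `(a*v)^c = a^c * v^c` for `a > 0` and arbitrary real `v`. -/
lemma rpow_mul_left_of_pos' {a : ℝ} (ha : 0 < a) (v c : ℝ) : (a * v) ^ c = a ^ c * v ^ c := by
  rcases lt_trichotomy v 0 with hv | hv | hv
  · rw [Real.rpow_def_of_neg (by nlinarith) c, Real.rpow_def_of_neg hv c,
      Real.rpow_def_of_pos ha c, Real.log_mul ha.ne' hv.ne, add_mul, Real.exp_add]
    ring
  · by_cases hc : c = 0
    · simp [hc]
    · simp [hv, Real.zero_rpow hc]
  · exact Real.mul_rpow ha.le hv.le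

/-- Scaling change of variables for a lower Lebesgue integral over `(0,∞)`. -/
lemma lint_Ioi_scale' {a : ℝ} (ha : 0 < a) (F : ℝ → ENNReal) :
    ∫⁻ r in Set.Ioi (0:ℝ), F r = ENNReal.ofReal a * ∫⁻ r in Set.Ioi (0:ℝ), F (a * r) := by
  set e : ℝ ≃ᵐ ℝ := (Homeomorph.mulLeft₀ a ha.ne').toMeasurableEquiv with he
  have hcoe : (⇑e) = fun r : ℝ => a * r := by
    rw [he, Homeomorph.toMeasurableEquiv_coe, Homeomorph.coe_mulLeft₀]
  have hmap : Measure.map (⇑e) volume = ENNReal.ofReal |a⁻¹| • volume := by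
    rw [hcoe]
    exact Real.map_volume_mul_left ha.ne'
  have key : ∀ G : ℝ → ENNReal, ∫⁻ r, G r = ENNReal.ofReal a * ∫⁻ r, G (a * r) := by
    intro G
    have h1 : ∫⁻ r, G (a * r) = ∫⁻ r, G (e r) := by rw [hcoe]
    rw [h1, ← lintegral_map_equiv G e, hmap, lintegral_smul_measure, smul_eq_mul, ← mul_assoc,
      ← ENNReal.ofReal_mul ha.le, abs_of_pos (inv_pos.2 ha), mul_inv_cancel₀ ha.ne',
      ENNReal.ofReal_one, one_mul]
  rw [← lintegral_indicator measurableSet_Ioi, ← lintegral_indicator measurableSet_Ioi,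
    key ((Set.Ioi (0:ℝ)).indicator F)]
  congr 1
  apply lintegral_congr
  intro r
  by_cases hr : r ∈ Set.Ioi (0:ℝ)
  · rw [Set.indicator_of_mem hr, Set.indicator_of_mem (by exact mul_pos ha hr)]
  · rw [Set.indicator_of_notMem hr, Set.indicator_of_notMem]
    simp only [Set.mem_Ioi, not_lt] at hr ⊢
    exact mul_nonpos_iff.2 (Or.inl ⟨ha.le, hr⟩)

/-- Scaling change of variables for a lower Lebesgue integral over `ℝ^d`. -/
lemma lint_smul_scale' {d : ℕ} {b : ℝ} (hb : 0 < b) (K : EuclideanSpace ℝ (Fin d) → ENNReal) :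
    ∫⁻ x, K (b • x) = ENNReal.ofReal ((b ^ d)⁻¹) * ∫⁻ x, K x := by
  set e : EuclideanSpace ℝ (Fin d) ≃ᵐ EuclideanSpace ℝ (Fin d) :=
    (Homeomorph.smulOfNeZero b hb.ne').toMeasurableEquiv with he
  have hcoe : (⇑e) = fun x : EuclideanSpace ℝ (Fin d) => b • x := by
    rw [he, Homeomorph.toMeasurableEquiv_coe]
    rfl
  have hmap : Measure.map (⇑e) volume
      = ENNReal.ofReal |(b ^ Module.finrank ℝ (EuclideanSpace ℝ (Fin d)))⁻¹| • volume := by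
    rw [hcoe]
    exact Measure.map_addHaar_smul volume hb.ne'
  have h1 : ∫⁻ x, K (b • x) = ∫⁻ x, K (e x) := by rw [hcoe]
  rw [h1, ← lintegral_map_equiv K e, hmap, lintegral_smul_measure, smul_eq_mul,
    finrank_euclideanSpace_fin, abs_of_pos (inv_pos.2 (pow_pos hb d))]

/-- The density at time `t` of a self-similar transition kernel on `ℝ^d`:
`p_t(x) = t^{−d/α} q(t^{−1/α} x)`. -/
noncomputable def pker (d : ℕ) (α : ℝ) (q : EuclideanSpace ℝ (Fin d) → ℝ) (t : ℝ)
    (x : EuclideanSpace ℝ (Fin d)) : ℝ :=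
  t ^ (-(d : ℝ) / α) * q ((t ^ (-(1 : ℝ) / α)) • x)

lemma pker_scale' {d : ℕ} {α : ℝ} (q : EuclideanSpace ℝ (Fin d) → ℝ) {a : ℝ} (ha : 0 < a)
    (s : ℝ) (x : EuclideanSpace ℝ (Fin d)) :
    pker d α q (a * s) x
      = a ^ (-(d : ℝ) / α) * pker d α q s ((a ^ (-(1:ℝ) / α)) • x) := by
  unfold pker
  rw [rpow_mul_left_of_pos' ha s (-(d : ℝ) / α), rpow_mul_left_of_pos' ha s (-(1:ℝ) / α),
    mul_smul, smul_comm]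
  ring_nf

lemma interval_scale' {d : ℕ} {α : ℝ} (q : EuclideanSpace ℝ (Fin d) → ℝ) {a : ℝ} (ha : 0 < a)
    (r T : ℝ) (x : EuclideanSpace ℝ (Fin d)) :
    (∫ u in (a*r)..(a*T), pker d α q (u - a*r) x)
      = a ^ (1 - (d:ℝ)/α) * ∫ u in r..T, pker d α q (u - r) ((a ^ (-(1:ℝ) / α)) • x) := by
  rw [intervalIntegral.integral_comp_sub_right (fun s => pker d α q s x) (a*r)]
  rw [show a*r - a*r = a*0 by ring, show a*T - a*r = a*(T - r) by ring,
    ← intervalIntegral.smul_integral_comp_mul_left (fun s => pker d α q s x) a]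
  rw [intervalIntegral.integral_comp_sub_right
    (fun s => pker d α q s ((a ^ (-(1:ℝ) / α)) • x)) r, sub_self]
  simp_rw [pker_scale' q ha]
  rw [intervalIntegral.integral_const_mul, smul_eq_mul, ← mul_assoc,
    show (1 - (d:ℝ)/α) = 1 + (-(d:ℝ)/α) by ring, Real.rpow_add ha, Real.rpow_one]

/-- Self-similarity identity for the limit process `ξ` (Proposition 2.3(b)): for every
`a > 0`, `0 ≤ t₁ < ⋯ < t_k` and `z₁, …, z_k ∈ ℝ`,
`∫_{ℝ^d}∫_0^∞ |Σ_j z_j 𝟙_{[0,a t_j]}(r) ∫_r^{a t_j} p_{u−r}(x) du|^{1+β} dr dx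
  = a^{2+β−(d/α)β} ∫_{ℝ^d}∫_0^∞ |Σ_j z_j 𝟙_{[0,t_j]}(r) ∫_r^{t_j} p_{u−r}(x) du|^{1+β} dr dx`
as an identity in `[0,∞]`. -/
theorem stmt7 (d : ℕ) (hd : 1 ≤ d) (α β : ℝ) (hα0 : 0 < α) (hα2 : α ≤ 2)
    (hβ0 : 0 < β) (hβ1 : β ≤ 1)
    (q : EuclideanSpace ℝ (Fin d) → ℝ) (hqm : Measurable q) (hq0 : ∀ x, 0 ≤ q x)
    (a : ℝ) (ha : 0 < a) (k : ℕ) (hk : 1 ≤ k)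
    (t : Fin k → ℝ) (ht0 : ∀ j, 0 ≤ t j) (htmono : StrictMono t) (z : Fin k → ℝ) :
    (∫⁻ x : EuclideanSpace ℝ (Fin d), ∫⁻ r in Set.Ioi (0:ℝ),
        ENNReal.ofReal
          (|∑ j, z j * (Set.Icc (0:ℝ) (a * t j)).indicator (fun _ => (1:ℝ)) r *
              ∫ u in r..(a * t j), pker d α q (u - r) x| ^ (1 + β)))
      = ENNReal.ofReal (a ^ (2 + β - ((d : ℝ) / α) * β)) *
        ∫⁻ x : EuclideanSpace ℝ (Fin d), ∫⁻ r in Set.Ioi (0:ℝ),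
          ENNReal.ofReal
            (|∑ j, z j * (Set.Icc (0:ℝ) (t j)).indicator (fun _ => (1:ℝ)) r *
                ∫ u in r..(t j), pker d α q (u - r) x| ^ (1 + β)) := by
  set b : ℝ := a ^ (-(1:ℝ) / α) with hb_def
  have hb : 0 < b := Real.rpow_pos_of_pos ha _
  set c1 : ℝ := a ^ (1 - (d:ℝ)/α) with hc1_def
  have hc1 : 0 < c1 := Real.rpow_pos_of_pos ha _
  -- pointwise identity for the sums
  have hpt : ∀ (x : EuclideanSpace ℝ (Fin d)) (r : ℝ),
      (∑ j, z j * (Set.Icc (0:ℝ) (a * t j)).indicator (fun _ => (1:ℝ)) (a * r) *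
          ∫ u in (a*r)..(a * t j), pker d α q (u - (a*r)) x)
      = c1 * ∑ j, z j * (Set.Icc (0:ℝ) (t j)).indicator (fun _ => (1:ℝ)) r *
          ∫ u in r..(t j), pker d α q (u - r) (b • x) := by
    intro x r
    rw [Finset.mul_sum]
    refine Finset.sum_congr rfl fun j _ => ?_
    have hmem : a * r ∈ Set.Icc (0:ℝ) (a * t j) ↔ r ∈ Set.Icc (0:ℝ) (t j) := by
      simp only [Set.mem_Icc]
      constructor
      · rintro ⟨h1, h2⟩
        constructor <;> nlinarith
      · rintro ⟨h1, h2⟩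
        constructor <;> nlinarith
    have hind : (Set.Icc (0:ℝ) (a * t j)).indicator (fun _ => (1:ℝ)) (a * r)
        = (Set.Icc (0:ℝ) (t j)).indicator (fun _ => (1:ℝ)) r := by
      rw [Set.indicator_apply, Set.indicator_apply, if_congr hmem rfl rfl]
    rw [hind, interval_scale' q ha r (t j) x, ← hb_def, ← hc1_def]
    ring
  -- inner (time) substitution, for each fixed x
  have step_inner : ∀ x : EuclideanSpace ℝ (Fin d),
      (∫⁻ r in Set.Ioi (0:ℝ), ENNReal.ofReal
          (|∑ j, z j * (Set.Icc (0:ℝ) (a * t j)).indicator (fun _ => (1:ℝ)) r *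
              ∫ u in r..(a * t j), pker d α q (u - r) x| ^ (1 + β)))
      = (ENNReal.ofReal a * ENNReal.ofReal (c1 ^ (1 + β))) *
          ∫⁻ r in Set.Ioi (0:ℝ), ENNReal.ofReal
            (|∑ j, z j * (Set.Icc (0:ℝ) (t j)).indicator (fun _ => (1:ℝ)) r *
                ∫ u in r..(t j), pker d α q (u - r) (b • x)| ^ (1 + β)) := by
    intro x
    rw [lint_Ioi_scale' ha (fun r => ENNReal.ofReal
      (|∑ j, z j * (Set.Icc (0:ℝ) (a * t j)).indicator (fun _ => (1:ℝ)) r *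
          ∫ u in r..(a * t j), pker d α q (u - r) x| ^ (1 + β)))]
    have hptE : ∀ r : ℝ, ENNReal.ofReal
        (|∑ j, z j * (Set.Icc (0:ℝ) (a * t j)).indicator (fun _ => (1:ℝ)) (a * r) *
            ∫ u in (a*r)..(a * t j), pker d α q (u - (a*r)) x| ^ (1 + β))
        = ENNReal.ofReal (c1 ^ (1 + β)) * ENNReal.ofReal
            (|∑ j, z j * (Set.Icc (0:ℝ) (t j)).indicator (fun _ => (1:ℝ)) r *
                ∫ u in r..(t j), pker d α q (u - r) (b • x)| ^ (1 + β)) := by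
      intro r
      rw [hpt x r, abs_mul, abs_of_pos hc1, Real.mul_rpow hc1.le (abs_nonneg _),
        ENNReal.ofReal_mul (by positivity)]
    simp_rw [hptE]
    rw [lintegral_const_mul' _ _ ENNReal.ofReal_ne_top, ← mul_assoc]
  simp_rw [step_inner]
  rw [lintegral_const_mul' _ _ (ENNReal.mul_ne_top ENNReal.ofReal_ne_top ENNReal.ofReal_ne_top)]
  rw [lint_smul_scale' hb (fun y => ∫⁻ r in Set.Ioi (0:ℝ), ENNReal.ofReal
      (|∑ j, z j * (Set.Icc (0:ℝ) (t j)).indicator (fun _ => (1:ℝ)) r *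
          ∫ u in r..(t j), pker d α q (u - r) y| ^ (1 + β)))]
  rw [← mul_assoc, ← ENNReal.ofReal_mul (by positivity), ← ENNReal.ofReal_mul (by positivity)]
  congr 2
  have e1 : c1 ^ (1 + β) = a ^ ((1 - (d:ℝ)/α) * (1 + β)) := by
    rw [hc1_def, ← Real.rpow_mul ha.le]
  have e2 : ((b ^ d)⁻¹ : ℝ) = a ^ (-((-(1:ℝ) / α) * d)) := by
    rw [hb_def, ← Real.rpow_natCast (a ^ (-(1:ℝ) / α)) d, ← Real.rpow_mul ha.le,
      Real.rpow_neg ha.le]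
  rw [e1, e2, mul_assoc, ← Real.rpow_add ha]
  nth_rewrite 1 [← Real.rpow_one a]
  rw [← Real.rpow_add ha]
  congr 1
  field_simp
  ring
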